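/- Let π be a group and suppose there exist an integer q ≥ 2 and a ℤ[π]-module B such that the group cohomology H^q(π; B) is nonzero. Then there exists a ℤ[π]-module A such that the group cohomology H²(π; A) is nonzero. -/

import Mathlib

open CategoryTheory

namespace GCDimShift

variable {k G : Type} [CommRing k] [Group G]

/-- The coinduced representation `Fun(G, M)` with `(g • f) x = f (x * g)`. -/
noncomputable def coind (M : Rep k G) : Rep k G :=
  Rep.of (X := G → M)
    { toFun := fun g =>
        { toFun := fun f x => f (x * g)
          map_add' := fun _ _ => rfl
          map_smul' := fun _ _ => rfl }
      map_one' := by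
        refine LinearMap.ext fun f => funext fun x => ?_
        simp
      map_mul' := fun g h => by
        refine LinearMap.ext fun f => funext fun x => ?_
        simp [mul_assoc] }

@[simp] lemma coind_ρ_apply (M : Rep k G) (g : G) (f : coind M) (x : G) :
    ((coind M).ρ g f : G → M) x = (f : G → M) (x * g) := rfl

/-- The inclusion `M ⟶ coind M`, `m ↦ (x ↦ ρ x m)`. -/
noncomputable def coindι (M : Rep k G) : M ⟶ coind M := ConcreteCategory.ofHom
  { toLinearMap :=
    { toFun := fun m x => M.ρ x m
      map_add' := fun a b => funext fun x => map_add (M.ρ x) a b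
      map_smul' := fun r a => funext fun x => map_smul (M.ρ x) r a }
    isIntertwining' := fun g => by
      refine LinearMap.ext fun m => funext fun x => ?_
      exact (LinearMap.congr_fun (map_mul M.ρ x g) m).symm }

lemma coindι_injective (M : Rep k G) : Function.Injective (coindι M).hom := by
  intro a b h
  have : M.ρ 1 a = M.ρ 1 b := congrArg (fun f : G → M => f 1) h
  simpa using this

/-- The range of `coindι`. -/
noncomputable def ιrange (M : Rep k G) : Submodule k (coind M) :=
  LinearMap.range (coindι M).hom.toLinearMap

lemma ρ_ιrange_le (M : Rep k G) (g : G) :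
    ιrange M ≤ Submodule.comap ((coind M).ρ g) (ιrange M) := by
  rintro _ ⟨m, rfl⟩
  refine ⟨M.ρ g m, ?_⟩
  exact Rep.hom_comm_apply (coindι M) g m


/-- The quotient representation `coind M ⧸ M`. -/
noncomputable def quotRep (M : Rep k G) : Rep k G :=
  Rep.of (X := (coind M : Type) ⧸ ιrange M)
    { toFun := fun g => Submodule.mapQ (ιrange M) (ιrange M) ((coind M).ρ g) (ρ_ιrange_le M g)
      map_one' := by
        refine Submodule.linearMap_qext _ ?_
        refine LinearMap.ext fun f => ?_
        simp
      map_mul' := fun g h => by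
        refine Submodule.linearMap_qext _ ?_
        refine LinearMap.ext fun f => ?_
        simp [map_mul] }

set_option maxHeartbeats 800000 in
/-- The projection `coind M ⟶ quotRep M`. -/
noncomputable def quotπ (M : Rep k G) : coind M ⟶ quotRep M := ConcreteCategory.ofHom
  { toLinearMap := (ιrange M).mkQ
    isIntertwining' := fun g => LinearMap.ext fun f => rfl }

lemma quotπ_surjective (M : Rep k G) : Function.Surjective (quotπ M).hom :=
  Submodule.mkQ_surjective _

lemma quotπ_ker (M : Rep k G) (f : coind M) (h : (quotπ M).hom f = 0) :
    ∃ m : M, (coindι M).hom m = f := by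
  have : f ∈ ιrange M := (Submodule.Quotient.mk_eq_zero _).1 h
  exact this


open groupCohomology

lemma d_comm {A B : Rep k G} (f : A ⟶ B) (n : ℕ) (c : (Fin n → G) → A) :
    (inhomogeneousCochains.d B n).hom (fun g => f.hom (c g))
      = fun g => f.hom ((inhomogeneousCochains.d A n).hom c g) := by
  funext g
  simp only [inhomogeneousCochains.d_hom_apply, map_add, map_sum, map_smul, Rep.hom_comm_apply]

/-- Postcomposition on inhomogeneous cochains induced by a morphism of representations. -/
noncomputable def cochainsMap {A B : Rep k G} (f : A ⟶ B) :
    inhomogeneousCochains A ⟶ inhomogeneousCochains B where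
  f n := ModuleCat.ofHom (LinearMap.compLeft f.hom.toLinearMap (Fin n → G))
  comm' := by
    rintro i j (rfl : i + 1 = j)
    rw [inhomogeneousCochains.d_def, inhomogeneousCochains.d_def]
    refine ModuleCat.hom_ext (LinearMap.ext fun c => funext fun g => ?_)
    show (inhomogeneousCochains.d B i).hom (f.hom ∘ c) g
      = f.hom ((inhomogeneousCochains.d A i).hom c g)
    exact congrFun (d_comm f i c) g

@[simp] lemma cochainsMap_f_apply {A B : Rep k G} (f : A ⟶ B) (n : ℕ)
    (c : (Fin n → G) → A) (g : Fin n → G) :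
    (((cochainsMap f).f n).hom c : (Fin n → G) → B) g = f.hom (c g) := rfl


/-- The short exact sequence of cochain complexes
`0 ⟶ C(M) ⟶ C(coind M) ⟶ C(quotRep M) ⟶ 0`. -/
noncomputable def cplxSES (M : Rep k G) : ShortComplex (CochainComplex (ModuleCat k) ℕ) :=
  ShortComplex.mk (cochainsMap (coindι M)) (cochainsMap (quotπ M)) (by
    ext n : 1
    refine ModuleCat.hom_ext (LinearMap.ext fun c => funext fun g => ?_)
    show (quotπ M).hom ((coindι M).hom (c g)) = 0
    exact (Submodule.Quotient.mk_eq_zero _).2 ⟨c g, rfl⟩)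

lemma cplxSES_shortExact (M : Rep k G) : (cplxSES M).ShortExact := by
  refine HomologicalComplex.shortExact_of_degreewise_shortExact _ fun n => ?_
  refine ShortComplex.ShortExact.mk' ?_ ?_ ?_
  · rw [ShortComplex.moduleCat_exact_iff]
    intro c hc
    have hmem : ∀ g : Fin n → G, (c : (Fin n → G) → coind M) g ∈ ιrange M := by
      intro g
      have : (quotπ M).hom (c g) = 0 := congrArg (fun φ : (Fin n → G) → quotRep M => φ g) hc
      exact (Submodule.Quotient.mk_eq_zero _).1 this
    choose m hm using fun g => hmem g
    exact ⟨m, funext fun g => hm g⟩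
  · rw [ModuleCat.mono_iff_injective]
    intro a b h
    funext g
    exact coindι_injective M (congrArg (fun φ : (Fin n → G) → coind M => φ g) h)
  · rw [ModuleCat.epi_iff_surjective]
    intro c
    choose m hm using fun g => quotπ_surjective M ((c : (Fin n → G) → quotRep M) g)
    exact ⟨m, funext fun g => hm g⟩


lemma contractNth_zero_cons {n : ℕ} (x : G) (g : Fin (n + 1) → G) :
    Fin.contractNth 0 (· * ·) (Fin.cons x g)
      = Fin.cons (x * g 0) (fun i => g i.succ) := by
  funext i
  refine Fin.cases ?_ (fun i => ?_) i
  · rw [Fin.contractNth_apply_of_eq _ _ _ _ rfl]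
    simp
  · rw [Fin.contractNth_apply_of_gt _ _ _ _ (by simp)]
    simp

lemma contractNth_succ_cons {n : ℕ} (j : Fin (n + 1)) (x : G) (g : Fin (n + 1) → G) :
    Fin.contractNth j.succ (· * ·) (Fin.cons x g)
      = Fin.cons x (Fin.contractNth j (· * ·) g) := by
  funext i
  refine Fin.cases ?_ (fun i => ?_) i
  · rw [Fin.contractNth_apply_of_lt _ _ _ _ (by simp)]
    simp
  · have hr : (Fin.cons x (Fin.contractNth j (· * ·) g) : Fin (n + 1) → G) i.succ
        = Fin.contractNth j (· * ·) g i := by simp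
    rw [hr]
    rcases lt_trichotomy (i : ℕ) (j : ℕ) with h | h | h
    · rw [Fin.contractNth_apply_of_lt _ _ _ _ (by simpa using h),
        Fin.contractNth_apply_of_lt _ _ _ _ h]
      rw [← Fin.succ_castSucc, Fin.cons_succ]
    · rw [Fin.contractNth_apply_of_eq _ _ _ _ (by simpa using h),
        Fin.contractNth_apply_of_eq _ _ _ _ h]
      rw [← Fin.succ_castSucc, Fin.cons_succ, Fin.cons_succ]
    · rw [Fin.contractNth_apply_of_gt _ _ _ _ (by simpa using h),
        Fin.contractNth_apply_of_gt _ _ _ _ h, Fin.cons_succ]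

/-- The contracting homotopy for the cochain complex of the coinduced representation. -/
noncomputable def hh (M : Rep k G) (n : ℕ) (c : (Fin (n + 1) → G) → coind M) :
    (Fin n → G) → coind M :=
  fun g => (fun x => (c (Fin.cons x g) : G → M) 1 : G → M)

lemma key (M : Rep k G) (n : ℕ) (c : (Fin (n + 1) → G) → coind M)
    (g : Fin (n + 1) → G) (x : G) :
    ((inhomogeneousCochains.d (coind M) n).hom (hh M n c) : (Fin (n + 1) → G) → coind M) g x
      + (hh M (n + 1) ((inhomogeneousCochains.d (coind M) (n + 1)).hom c) g : G → M) x
      = (c g : G → M) x := by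
  have e1 : ((coind M).ρ (g 0) (hh M n c fun i => g i.succ) : G → M) x
      = (c (Fin.cons (x * g 0) fun i => g i.succ) : G → M) 1 := rfl
  have e2 : ((∑ j : Fin (n + 1), (-1 : k) ^ ((j : ℕ) + 1) •
        hh M n c (Fin.contractNth j (· * ·) g) : coind M) : G → M) x
      = ∑ j : Fin (n + 1), (-1 : k) ^ ((j : ℕ) + 1) •
          (c (Fin.cons x (Fin.contractNth j (· * ·) g)) : G → M) 1 := by
    erw [Finset.sum_apply]
    rfl
  have e3 : (hh M (n + 1) ((inhomogeneousCochains.d (coind M) (n + 1)).hom c) g : G → M) x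
      = ((c g : G → M) x
        - (c (Fin.cons (x * g 0) fun i => g i.succ) : G → M) 1)
        + ∑ j : Fin (n + 1), ((-1 : k) ^ ((j : ℕ) + 1) * (-1 : k)) •
            (c (Fin.cons x (Fin.contractNth j (· * ·) g)) : G → M) 1 := by
    show (((inhomogeneousCochains.d (coind M) (n + 1)).hom c (Fin.cons x g) : coind M) : G → M) 1 = _
    erw [inhomogeneousCochains.d_hom_apply, Pi.add_apply, Finset.sum_apply, Fin.sum_univ_succ]
    rw [contractNth_zero_cons]
    simp only [contractNth_succ_cons, Pi.smul_apply]
    have h1 : (fun i => (Fin.cons x g : Fin (n + 2) → G) i.succ) = g :=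
      funext fun i => Fin.cons_succ _ _ _
    have h2 : ((coind M).ρ ((Fin.cons x g : Fin (n + 2) → G) 0)
        (c fun i => (Fin.cons x g : Fin (n + 2) → G) i.succ) : G → M) 1 = (c g : G → M) x := by
      rw [h1]
      show (c g : G → M) (1 * x) = (c g : G → M) x
      rw [one_mul]
    rw [h2]
    have h3 : ∀ j : Fin (n + 1), ((-1 : k) ^ ((j.succ : ℕ) + 1))
        = (-1 : k) ^ ((j : ℕ) + 1) * (-1 : k) := by
      intro j
      rw [Fin.val_succ]
      ring
    rw [Finset.sum_congr rfl fun j _ => by rw [h3 j]]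
    simp only [Pi.smul_apply, Fin.val_zero, zero_add, pow_one, neg_one_smul]
    rw [sub_eq_add_neg, add_assoc]
    rfl
  erw [inhomogeneousCochains.d_hom_apply, Pi.add_apply, e1, e2, e3]
  have hzero : (∑ j : Fin (n + 1), (-1 : k) ^ ((j : ℕ) + 1) •
        (c (Fin.cons x (Fin.contractNth j (· * ·) g)) : G → M) 1)
      + ∑ j : Fin (n + 1), ((-1 : k) ^ ((j : ℕ) + 1) * (-1 : k)) •
        (c (Fin.cons x (Fin.contractNth j (· * ·) g)) : G → M) 1 = 0 := by
    rw [← Finset.sum_add_distrib]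
    refine Finset.sum_eq_zero fun j _ => ?_
    rw [← add_smul]
    have : (-1 : k) ^ ((j : ℕ) + 1) + (-1 : k) ^ ((j : ℕ) + 1) * (-1 : k) = 0 := by ring
    rw [this, zero_smul]
  conv_rhs => rw [← add_zero ((c g : G → M) x), ← hzero]
  abel


lemma coind_exactAt (M : Rep k G) (n : ℕ) :
    (inhomogeneousCochains (coind M)).ExactAt (n + 1) := by
  rw [HomologicalComplex.exactAt_iff' _ n (n + 1) (n + 2) (by simp) (by simp)]
  rw [ShortComplex.moduleCat_exact_iff]
  intro c hc
  refine ⟨hh M n c, ?_⟩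
  have hc' : ∀ (g : Fin (n + 2) → G) (x : G),
      (((inhomogeneousCochains.d (coind M) (n + 1)).hom c : (Fin (n + 2) → G) → coind M) g : G → M) x
        = 0 := by
    intro g x
    have : ((inhomogeneousCochains (coind M)).d (n + 1) (n + 2)).hom c = 0 := hc
    rw [inhomogeneousCochains.d_def] at this
    exact congrFun (congrFun this g) x
  show ((inhomogeneousCochains (coind M)).d n (n + 1)).hom (hh M n c) = c
  rw [inhomogeneousCochains.d_def]
  funext g
  show (((inhomogeneousCochains.d (coind M) n).hom (hh M n c) : (Fin (n + 1) → G) → coind M) g : G → M)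
      = (c g : G → M)
  funext x
  have hk := key M n c g x
  have h0 : (hh M (n + 1) ((inhomogeneousCochains.d (coind M) (n + 1)).hom c) g : G → M) x = 0 := by
    show (((inhomogeneousCochains.d (coind M) (n + 1)).hom c
      : (Fin (n + 2) → G) → coind M) (Fin.cons x g) : G → M) 1 = 0
    exact hc' _ _
  rw [h0, add_zero] at hk
  exact hk

lemma coind_homology_isZero (M : Rep k G) (n : ℕ) :
    Limits.IsZero ((inhomogeneousCochains (coind M)).homology (n + 1)) := by
  rw [← HomologicalComplex.exactAt_iff_isZero_homology]
  exact coind_exactAt M n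


lemma step (M : Rep k G) (m : ℕ) (hM : Nontrivial (groupCohomology M (m + 2))) :
    Nontrivial (groupCohomology (quotRep M) (m + 1)) := by
  have hS := cplxSES_shortExact M
  have hrel : (ComplexShape.up ℕ).Rel (m + 1) (m + 2) := by simp
  have hex := hS.homology_exact₁ (m + 1) (m + 2) hrel
  have hz := coind_homology_isZero M (m + 1)
  have hg0 : HomologicalComplex.homologyMap (cplxSES M).f (m + 2) = 0 :=
    hz.eq_of_tgt _ _
  have hepi : Epi (hS.δ (m + 1) (m + 2) hrel) := hex.epi_f hg0
  have hsurj := (ModuleCat.epi_iff_surjective (hS.δ (m + 1) (m + 2) hrel)).1 hepi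
  have hnt : Nontrivial ((cplxSES M).X₁.homology (m + 2)) := hM
  exact hsurj.nontrivial

lemma descend (q : ℕ) (hq : 2 ≤ q) (B : Rep k G)
    (hB : Nontrivial (groupCohomology B q)) :
    ∃ A : Rep k G, Nontrivial (groupCohomology A 2) := by
  induction q, hq using Nat.le_induction generalizing B with
  | base => exact ⟨B, hB⟩
  | succ q hq ih =>
    obtain ⟨m, rfl⟩ : ∃ m, q = m + 1 := ⟨q - 1, by omega⟩
    exact ih (quotRep B) (step B m hB)

end GCDimShift


/-- If a group `π` has nonzero cohomology `H^q(π; B)` for some `q ≥ 2` and some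
`ℤ[π]`-module `B`, then there is a `ℤ[π]`-module `A` with `H²(π; A) ≠ 0`. -/
theorem exists_nonzero_H2_of_nonzero_Hq
    (π : Type) [Group π] (q : ℕ) (hq : 2 ≤ q) (B : Rep ℤ π)
    (hB : Nontrivial (groupCohomology B q)) :
    ∃ A : Rep ℤ π, Nontrivial (groupCohomology A 2) :=
  GCDimShift.descend q hq B hB
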